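/- Let R be a principal ideal domain, let n ∈ R be nonzero, and let n = a·b be a factorization into coprime elements a, b ∈ R, say u·a + v·b = 1. Write S = R/nR and let ā, b̄, ū, v̄ ∈ S be the residues of a, b, u, v. Let I ⊆ S[x₁,…,xₛ] be an ideal. Let G_a = (g_{a,k})_{k∈K} be a finite family of nonzero polynomials in S[x₁,…,xₛ] such that π_a(G_a) is a strong Gröbner basis of π_a(I) ⊆ (R/aR)[x₁,…,xₛ], the constant ā is a member of G_a, and for every member g of G_a other than ā the leading coefficient lc(g) divides ā in S and ā does not divide lc(g) in S. Let G_b = (g_{b,l})_{l∈L} be a finite family with the analogous properties with respect to b. For k ∈ K and l ∈ L put δ_{k,l} = lm(g_{a,k}) ⊔ lm(g_{b,l}) (componentwise maximum) and define f_{k,l} = ū·ā·lc(g_{a,k})·X^{δ_{k,l} − lm(g_{b,l})}·g_{b,l} + v̄·b̄·lc(g_{b,l})·X^{δ_{k,l} − lm(g_{a,k})}·g_{a,k}. Then G = { f_{k,l} : k ∈ K, l ∈ L } is a strong Gröbner basis of I. -/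

import Mathlib

open MvPolynomial

/-- The leading monomial (largest exponent vector of the support) of a multivariate
polynomial with respect to a monomial order. -/
noncomputable def MonomialOrder.lm {σ R : Type*} [CommSemiring R] (m : MonomialOrder σ)
    (f : MvPolynomial σ R) : σ →₀ ℕ :=
  m.toSyn.symm (f.support.sup fun d => m.toSyn d)

/-- The leading coefficient of a multivariate polynomial with respect to a monomial order. -/
noncomputable def MonomialOrder.lc {σ R : Type*} [CommSemiring R] (m : MonomialOrder σ)
    (f : MvPolynomial σ R) : R :=
  f.coeff (m.lm f)

/-- `G` is a strong Gröbner basis of an ideal `I` w.r.t. the monomial order `m` if `G ⊆ I`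
and for every nonzero `f ∈ I` there is a nonzero `g ∈ G` whose leading term divides the
leading term of `f`, i.e. `lm g ≤ lm f` componentwise and `lc g ∣ lc f`. -/
def MonomialOrder.IsStrongGroebnerBasis {σ R : Type*} [CommSemiring R] (m : MonomialOrder σ)
    (G : Set (MvPolynomial σ R)) (I : Ideal (MvPolynomial σ R)) : Prop :=
  (∀ g ∈ G, g ∈ I) ∧
    ∀ f ∈ I, f ≠ 0 → ∃ g ∈ G, g ≠ 0 ∧ m.lm g ≤ m.lm f ∧ m.lc g ∣ m.lc f

section Helpers

namespace MonomialOrder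

variable {σ : Type*} (m : MonomialOrder σ)

variable {A B : Type*} [CommSemiring A] [CommSemiring B]

lemma lc_def' (f : MvPolynomial σ A) : m.lc f = f.coeff (m.lm f) := rfl

lemma toSyn_le_lm' {f : MvPolynomial σ A} {d : σ →₀ ℕ} (hd : d ∈ f.support) :
    m.toSyn d ≤ m.toSyn (m.lm f) := by
  rw [MonomialOrder.lm, AddEquiv.apply_symm_apply]
  exact Finset.le_sup hd

lemma lm_eq_of' {f : MvPolynomial σ A} {δ : σ →₀ ℕ} (h1 : f.coeff δ ≠ 0)
    (h2 : ∀ d ∈ f.support, m.toSyn d ≤ m.toSyn δ) : m.lm f = δ := by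
  have h3 : f.support.sup (fun d => m.toSyn d) = m.toSyn δ :=
    le_antisymm (Finset.sup_le h2) (Finset.le_sup (MvPolynomial.mem_support_iff.2 h1))
  rw [MonomialOrder.lm, h3, AddEquiv.symm_apply_apply]

lemma lc_eq_of' {f : MvPolynomial σ A} {δ : σ →₀ ℕ} (h1 : f.coeff δ ≠ 0)
    (h2 : ∀ d ∈ f.support, m.toSyn d ≤ m.toSyn δ) : m.lc f = f.coeff δ := by
  rw [MonomialOrder.lc, m.lm_eq_of' h1 h2]

lemma lm_mem_support' {f : MvPolynomial σ A} (hf : f ≠ 0) : m.lm f ∈ f.support := by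
  obtain ⟨d, hd, hsup⟩ := Finset.exists_mem_eq_sup f.support
    (MvPolynomial.support_nonempty.2 hf) (fun d => m.toSyn d)
  rw [MonomialOrder.lm, hsup, AddEquiv.symm_apply_apply]
  exact hd

lemma lc_ne_zero' {f : MvPolynomial σ A} (hf : f ≠ 0) : m.lc f ≠ 0 :=
  MvPolynomial.mem_support_iff.1 (m.lm_mem_support' hf)

lemma toSyn_le_of_mem_support_monomial_mul {e : σ →₀ ℕ} {c : A} {g : MvPolynomial σ A}
    {d : σ →₀ ℕ} (hd : d ∈ (MvPolynomial.monomial e c * g).support) :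
    m.toSyn d ≤ m.toSyn e + m.toSyn (m.lm g) := by
  classical
  have h := MvPolynomial.support_mul _ _ hd
  rw [Finset.mem_add] at h
  obtain ⟨x, hx, y, hy, rfl⟩ := h
  have hxe : x = e := by
    by_cases hc : c = 0
    · simp [hc, MvPolynomial.support_monomial] at hx
    · simpa [hc, MvPolynomial.support_monomial] using hx
  subst hxe
  rw [map_add]
  exact add_le_add (le_refl _) (m.toSyn_le_lm' hy)

lemma lm_map' {φ : A →+* B} {f : MvPolynomial σ A} (h : φ (m.lc f) ≠ 0) :
    m.lm (MvPolynomial.map φ f) = m.lm f ∧ m.lc (MvPolynomial.map φ f) = φ (m.lc f) := by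
  have h1 : (MvPolynomial.map φ f).coeff (m.lm f) = φ (m.lc f) := MvPolynomial.coeff_map φ f _
  have h2 : ∀ d ∈ (MvPolynomial.map φ f).support, m.toSyn d ≤ m.toSyn (m.lm f) := fun d hd =>
    m.toSyn_le_lm' (MvPolynomial.support_map_subset _ _ hd)
  have h1' : (MvPolynomial.map φ f).coeff (m.lm f) ≠ 0 := by rw [h1]; exact h
  exact ⟨m.lm_eq_of' h1' h2, (m.lc_eq_of' h1' h2).trans h1⟩

end MonomialOrder

private lemma unit_mul_dvd' {A : Type*} [CommRing A] {u x y : A} (hu : IsUnit u) (h : x ∣ y) :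
    u * x ∣ y := by
  obtain ⟨w, hw⟩ := hu.exists_right_inv
  obtain ⟨t, rfl⟩ := h
  exact ⟨w * t, by rw [show u * x * (w * t) = (u * w) * (x * t) by ring, hw, one_mul]⟩

private lemma mul_unit_dvd' {A : Type*} [CommRing A] {u x y : A} (hu : IsUnit u) (h : x ∣ y) :
    x * u ∣ y := by
  rw [mul_comm]; exact unit_mul_dvd' hu h

section QuotHelpers

variable {R : Type*} [CommRing R] {n a b u v : R}

private lemma quot_ker_iff (hdvd : a ∣ n)
    (φa : (R ⧸ Ideal.span ({n} : Set R)) →+* R ⧸ Ideal.span ({a} : Set R))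
    (hφa : ∀ r : R, φa (Ideal.Quotient.mk _ r) = Ideal.Quotient.mk _ r)
    (x : R ⧸ Ideal.span ({n} : Set R)) :
    φa x = 0 ↔ Ideal.Quotient.mk (Ideal.span ({n} : Set R)) a ∣ x := by
  obtain ⟨r, rfl⟩ := Ideal.Quotient.mk_surjective x
  rw [hφa, Ideal.Quotient.eq_zero_iff_mem, Ideal.mem_span_singleton]
  constructor
  · rintro ⟨s, rfl⟩
    exact ⟨Ideal.Quotient.mk _ s, by rw [map_mul]⟩
  · rintro ⟨y, hy⟩
    obtain ⟨s, rfl⟩ := Ideal.Quotient.mk_surjective y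
    rw [← map_mul, Ideal.Quotient.eq, Ideal.mem_span_singleton] at hy
    obtain ⟨t, ht⟩ := hy
    obtain ⟨w, hw⟩ := hdvd
    exact ⟨w * t + s, by linear_combination ht + t * hw⟩

private lemma quot_inj (hnab : n = a * b) (huv : u * a + v * b = 1)
    (φa : (R ⧸ Ideal.span ({n} : Set R)) →+* R ⧸ Ideal.span ({a} : Set R))
    (hφa : ∀ r : R, φa (Ideal.Quotient.mk _ r) = Ideal.Quotient.mk _ r)
    (φb : (R ⧸ Ideal.span ({n} : Set R)) →+* R ⧸ Ideal.span ({b} : Set R))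
    (hφb : ∀ r : R, φb (Ideal.Quotient.mk _ r) = Ideal.Quotient.mk _ r)
    {z : R ⧸ Ideal.span ({n} : Set R)} (hza : φa z = 0) (hzb : φb z = 0) : z = 0 := by
  obtain ⟨r, rfl⟩ := Ideal.Quotient.mk_surjective z
  rw [hφa, Ideal.Quotient.eq_zero_iff_mem, Ideal.mem_span_singleton] at hza
  rw [hφb, Ideal.Quotient.eq_zero_iff_mem, Ideal.mem_span_singleton] at hzb
  rw [Ideal.Quotient.eq_zero_iff_mem, Ideal.mem_span_singleton, hnab]
  exact IsCoprime.mul_dvd ⟨u, v, huv⟩ hza hzb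

private lemma quot_dvd_glue (hnab : n = a * b) (huv : u * a + v * b = 1)
    (φa : (R ⧸ Ideal.span ({n} : Set R)) →+* R ⧸ Ideal.span ({a} : Set R))
    (hφa : ∀ r : R, φa (Ideal.Quotient.mk _ r) = Ideal.Quotient.mk _ r)
    (φb : (R ⧸ Ideal.span ({n} : Set R)) →+* R ⧸ Ideal.span ({b} : Set R))
    (hφb : ∀ r : R, φb (Ideal.Quotient.mk _ r) = Ideal.Quotient.mk _ r)
    {x y : R ⧸ Ideal.span ({n} : Set R)}
    (hxa : φa x ∣ φa y) (hxb : φb x ∣ φb y) : x ∣ y := by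
  obtain ⟨sa, hsa⟩ := hxa
  obtain ⟨sb, hsb⟩ := hxb
  obtain ⟨s, rfl⟩ : ∃ s, φa s = sa := by
    obtain ⟨r, hr⟩ := Ideal.Quotient.mk_surjective sa
    exact ⟨Ideal.Quotient.mk _ r, by rw [hφa, hr]⟩
  obtain ⟨t, rfl⟩ : ∃ t, φb t = sb := by
    obtain ⟨r, hr⟩ := Ideal.Quotient.mk_surjective sb
    exact ⟨Ideal.Quotient.mk _ r, by rw [hφb, hr]⟩
  have ea0 : φa (Ideal.Quotient.mk (Ideal.span ({n} : Set R)) (u * a)) = 0 := by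
    rw [hφa, Ideal.Quotient.eq_zero_iff_mem, Ideal.mem_span_singleton]
    exact dvd_mul_left a u
  have ea1 : φa (Ideal.Quotient.mk (Ideal.span ({n} : Set R)) (v * b)) = 1 := by
    rw [hφa]
    have h0 : Ideal.Quotient.mk (Ideal.span ({a} : Set R)) (u * a) = 0 := by
      rw [Ideal.Quotient.eq_zero_iff_mem, Ideal.mem_span_singleton]
      exact dvd_mul_left a u
    calc Ideal.Quotient.mk (Ideal.span ({a} : Set R)) (v * b)
        = Ideal.Quotient.mk (Ideal.span ({a} : Set R)) (u * a + v * b)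
          - Ideal.Quotient.mk (Ideal.span ({a} : Set R)) (u * a) := by rw [map_add]; ring
      _ = 1 := by rw [huv, map_one, h0, sub_zero]
  have eb0 : φb (Ideal.Quotient.mk (Ideal.span ({n} : Set R)) (v * b)) = 0 := by
    rw [hφb, Ideal.Quotient.eq_zero_iff_mem, Ideal.mem_span_singleton]
    exact dvd_mul_left b v
  have eb1 : φb (Ideal.Quotient.mk (Ideal.span ({n} : Set R)) (u * a)) = 1 := by
    rw [hφb]
    have h0 : Ideal.Quotient.mk (Ideal.span ({b} : Set R)) (v * b) = 0 := by
      rw [Ideal.Quotient.eq_zero_iff_mem, Ideal.mem_span_singleton]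
      exact dvd_mul_left b v
    calc Ideal.Quotient.mk (Ideal.span ({b} : Set R)) (u * a)
        = Ideal.Quotient.mk (Ideal.span ({b} : Set R)) (u * a + v * b)
          - Ideal.Quotient.mk (Ideal.span ({b} : Set R)) (v * b) := by rw [map_add]; ring
      _ = 1 := by rw [huv, map_one, h0, sub_zero]
  set z := Ideal.Quotient.mk (Ideal.span ({n} : Set R)) (v * b) * s
      + Ideal.Quotient.mk (Ideal.span ({n} : Set R)) (u * a) * t with hz
  refine ⟨z, ?_⟩
  have hφaz : φa z = φa s := by
    rw [hz, map_add,
      show φa (Ideal.Quotient.mk (Ideal.span ({n} : Set R)) (v * b) * s)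
        = φa (Ideal.Quotient.mk (Ideal.span ({n} : Set R)) (v * b)) * φa s from map_mul _ _ _,
      show φa (Ideal.Quotient.mk (Ideal.span ({n} : Set R)) (u * a) * t)
        = φa (Ideal.Quotient.mk (Ideal.span ({n} : Set R)) (u * a)) * φa t from map_mul _ _ _,
      ea0, ea1, one_mul, zero_mul, add_zero]
  have hφbz : φb z = φb t := by
    rw [hz, map_add,
      show φb (Ideal.Quotient.mk (Ideal.span ({n} : Set R)) (v * b) * s)
        = φb (Ideal.Quotient.mk (Ideal.span ({n} : Set R)) (v * b)) * φb s from map_mul _ _ _,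
      show φb (Ideal.Quotient.mk (Ideal.span ({n} : Set R)) (u * a) * t)
        = φb (Ideal.Quotient.mk (Ideal.span ({n} : Set R)) (u * a)) * φb t from map_mul _ _ _,
      eb0, eb1, one_mul, zero_mul, zero_add]
  have h1 : φa (y - x * z) = 0 := by
    rw [map_sub, show φa (x * z) = φa x * φa z from map_mul _ _ _, hφaz, ← hsa, sub_self]
  have h2 : φb (y - x * z) = 0 := by
    rw [map_sub, show φb (x * z) = φb x * φb z from map_mul _ _ _, hφbz, ← hsb, sub_self]
  exact sub_eq_zero.1 (quot_inj hnab huv φa hφa φb hφb h1 h2)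

private lemma quot_mem_glue {σ : Type*} (hnab : n = a * b) (huv : u * a + v * b = 1)
    (φa : (R ⧸ Ideal.span ({n} : Set R)) →+* R ⧸ Ideal.span ({a} : Set R))
    (hφa : ∀ r : R, φa (Ideal.Quotient.mk _ r) = Ideal.Quotient.mk _ r)
    (φb : (R ⧸ Ideal.span ({n} : Set R)) →+* R ⧸ Ideal.span ({b} : Set R))
    (hφb : ∀ r : R, φb (Ideal.Quotient.mk _ r) = Ideal.Quotient.mk _ r)
    (I : Ideal (MvPolynomial σ (R ⧸ Ideal.span ({n} : Set R))))
    {f : MvPolynomial σ (R ⧸ Ideal.span ({n} : Set R))}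
    (ha : MvPolynomial.map φa f ∈ I.map (MvPolynomial.map φa))
    (hb : MvPolynomial.map φb f ∈ I.map (MvPolynomial.map φb)) : f ∈ I := by
  have surja : Function.Surjective φa := fun z => by
    obtain ⟨r, hr⟩ := Ideal.Quotient.mk_surjective z
    exact ⟨Ideal.Quotient.mk _ r, by rw [hφa, hr]⟩
  have surjb : Function.Surjective φb := fun z => by
    obtain ⟨r, hr⟩ := Ideal.Quotient.mk_surjective z
    exact ⟨Ideal.Quotient.mk _ r, by rw [hφb, hr]⟩
  obtain ⟨h, hI, hh⟩ :=
    (Ideal.mem_map_iff_of_surjective _ (MvPolynomial.map_surjective _ surja)).1 ha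
  obtain ⟨h', hI', hh'⟩ :=
    (Ideal.mem_map_iff_of_surjective _ (MvPolynomial.map_surjective _ surjb)).1 hb
  have key1 : MvPolynomial.C (Ideal.Quotient.mk (Ideal.span ({n} : Set R)) (v * b)) * f
      = MvPolynomial.C (Ideal.Quotient.mk (Ideal.span ({n} : Set R)) (v * b)) * h := by
    apply MvPolynomial.ext
    intro d
    rw [MvPolynomial.coeff_C_mul, MvPolynomial.coeff_C_mul]
    have h0 : φa (f.coeff d - h.coeff d) = 0 := by
      rw [map_sub, ← MvPolynomial.coeff_map, ← MvPolynomial.coeff_map, hh, sub_self]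
    rw [quot_ker_iff ⟨b, hnab⟩ φa hφa] at h0
    obtain ⟨s, hs⟩ := h0
    have hz : Ideal.Quotient.mk (Ideal.span ({n} : Set R)) (v * b)
        * (Ideal.Quotient.mk (Ideal.span ({n} : Set R)) a * s) = 0 := by
      rw [← mul_assoc, ← map_mul, show v * b * a = v * n by rw [hnab]; ring, map_mul,
        Ideal.Quotient.eq_zero_iff_mem.2 (Ideal.mem_span_singleton_self n), mul_zero, zero_mul]
    linear_combination (Ideal.Quotient.mk (Ideal.span ({n} : Set R)) (v * b)) * hs + hz
  have key2 : MvPolynomial.C (Ideal.Quotient.mk (Ideal.span ({n} : Set R)) (u * a)) * f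
      = MvPolynomial.C (Ideal.Quotient.mk (Ideal.span ({n} : Set R)) (u * a)) * h' := by
    apply MvPolynomial.ext
    intro d
    rw [MvPolynomial.coeff_C_mul, MvPolynomial.coeff_C_mul]
    have h0 : φb (f.coeff d - h'.coeff d) = 0 := by
      rw [map_sub, ← MvPolynomial.coeff_map, ← MvPolynomial.coeff_map, hh', sub_self]
    rw [quot_ker_iff ⟨a, by rw [hnab]; ring⟩ φb hφb] at h0
    obtain ⟨s, hs⟩ := h0
    have hz : Ideal.Quotient.mk (Ideal.span ({n} : Set R)) (u * a)
        * (Ideal.Quotient.mk (Ideal.span ({n} : Set R)) b * s) = 0 := by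
      rw [← mul_assoc, ← map_mul, show u * a * b = u * n by rw [hnab]; ring, map_mul,
        Ideal.Quotient.eq_zero_iff_mem.2 (Ideal.mem_span_singleton_self n), mul_zero, zero_mul]
    linear_combination (Ideal.Quotient.mk (Ideal.span ({n} : Set R)) (u * a)) * hs + hz
  have hone : (MvPolynomial.C (Ideal.Quotient.mk (Ideal.span ({n} : Set R)) (u * a))
      + MvPolynomial.C (Ideal.Quotient.mk (Ideal.span ({n} : Set R)) (v * b))
      : MvPolynomial σ (R ⧸ Ideal.span ({n} : Set R))) = 1 := by
    rw [← map_add, ← map_add, huv, map_one, map_one]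
  have hfeq : f = MvPolynomial.C (Ideal.Quotient.mk (Ideal.span ({n} : Set R)) (u * a)) * h'
      + MvPolynomial.C (Ideal.Quotient.mk (Ideal.span ({n} : Set R)) (v * b)) * h := by
    calc f = (MvPolynomial.C (Ideal.Quotient.mk (Ideal.span ({n} : Set R)) (u * a))
          + MvPolynomial.C (Ideal.Quotient.mk (Ideal.span ({n} : Set R)) (v * b))) * f := by
          rw [hone, one_mul]
      _ = MvPolynomial.C (Ideal.Quotient.mk (Ideal.span ({n} : Set R)) (u * a)) * f
          + MvPolynomial.C (Ideal.Quotient.mk (Ideal.span ({n} : Set R)) (v * b)) * f := by ring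
      _ = _ := by rw [key1, key2]
  rw [hfeq]
  exact I.add_mem (I.mul_mem_left _ hI') (I.mul_mem_left _ hI)

end QuotHelpers

end Helpers

/-- Recombination over the quotient `S = R/nR` of a PID, for a coprime factorization
`n = a·b` with `u·a + v·b = 1`: given strong Gröbner bases of the images of `I` in
`(R/aR)[x]` and `(R/bR)[x]` (normalized as stated, and containing the constants `ā`, `b̄`),
the recombined polynomials `f_{k,l}` form a strong Gröbner basis of `I ⊆ S[x]`. -/
theorem strongGroebnerBasis_recombination_quotient {σ R : Type*} [CommRing R] [IsDomain R]
    [IsPrincipalIdealRing R] [Finite σ] (m : MonomialOrder σ)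
    (n a b u v : R) (hn : n ≠ 0) (hnab : n = a * b) (huv : u * a + v * b = 1)
    (φa : (R ⧸ Ideal.span ({n} : Set R)) →+* R ⧸ Ideal.span ({a} : Set R))
    (hφa : ∀ r : R, φa (Ideal.Quotient.mk _ r) = Ideal.Quotient.mk _ r)
    (φb : (R ⧸ Ideal.span ({n} : Set R)) →+* R ⧸ Ideal.span ({b} : Set R))
    (hφb : ∀ r : R, φb (Ideal.Quotient.mk _ r) = Ideal.Quotient.mk _ r)
    (I : Ideal (MvPolynomial σ (R ⧸ Ideal.span ({n} : Set R))))
    {K L : Type*} [Finite K] [Finite L]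
    (ga : K → MvPolynomial σ (R ⧸ Ideal.span ({n} : Set R)))
    (gb : L → MvPolynomial σ (R ⧸ Ideal.span ({n} : Set R)))
    (hga0 : ∀ k, ga k ≠ 0) (hgb0 : ∀ l, gb l ≠ 0)
    (hGa : m.IsStrongGroebnerBasis ((fun f => MvPolynomial.map φa f) '' Set.range ga)
      (I.map (MvPolynomial.map φa)))
    (hGb : m.IsStrongGroebnerBasis ((fun f => MvPolynomial.map φb f) '' Set.range gb)
      (I.map (MvPolynomial.map φb)))
    (haGa : ∃ k, ga k = C (Ideal.Quotient.mk (Ideal.span ({n} : Set R)) a))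
    (hbGb : ∃ l, gb l = C (Ideal.Quotient.mk (Ideal.span ({n} : Set R)) b))
    (hlca : ∀ k, ga k ≠ C (Ideal.Quotient.mk (Ideal.span ({n} : Set R)) a) →
      m.lc (ga k) ∣ Ideal.Quotient.mk (Ideal.span ({n} : Set R)) a ∧
      ¬ (Ideal.Quotient.mk (Ideal.span ({n} : Set R)) a ∣ m.lc (ga k)))
    (hlcb : ∀ l, gb l ≠ C (Ideal.Quotient.mk (Ideal.span ({n} : Set R)) b) →
      m.lc (gb l) ∣ Ideal.Quotient.mk (Ideal.span ({n} : Set R)) b ∧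
      ¬ (Ideal.Quotient.mk (Ideal.span ({n} : Set R)) b ∣ m.lc (gb l))) :
    m.IsStrongGroebnerBasis
      { f | ∃ k : K, ∃ l : L, f =
        monomial (m.lm (ga k) ⊔ m.lm (gb l) - m.lm (gb l))
          (Ideal.Quotient.mk (Ideal.span ({n} : Set R)) (u * a) * m.lc (ga k)) * gb l
        + monomial (m.lm (ga k) ⊔ m.lm (gb l) - m.lm (ga k))
          (Ideal.Quotient.mk (Ideal.span ({n} : Set R)) (v * b) * m.lc (gb l)) * ga k }
      I := by
  classical
  have ha_n : a ∣ n := ⟨b, hnab⟩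
  have hb_n : b ∣ n := ⟨a, by rw [hnab, mul_comm]⟩
  have hker_a : ∀ x, φa x = 0 ↔ Ideal.Quotient.mk (Ideal.span ({n} : Set R)) a ∣ x :=
    fun x => quot_ker_iff ha_n φa hφa x
  have hker_b : ∀ x, φb x = 0 ↔ Ideal.Quotient.mk (Ideal.span ({n} : Set R)) b ∣ x :=
    fun x => quot_ker_iff hb_n φb hφb x
  have eaa : φa (Ideal.Quotient.mk (Ideal.span ({n} : Set R)) a) = 0 := by
    rw [hφa, Ideal.Quotient.eq_zero_iff_mem]
    exact Ideal.mem_span_singleton_self a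
  have ebb : φb (Ideal.Quotient.mk (Ideal.span ({n} : Set R)) b) = 0 := by
    rw [hφb, Ideal.Quotient.eq_zero_iff_mem]
    exact Ideal.mem_span_singleton_self b
  have ea0 : φa (Ideal.Quotient.mk (Ideal.span ({n} : Set R)) (u * a)) = 0 := by
    rw [hφa, Ideal.Quotient.eq_zero_iff_mem, Ideal.mem_span_singleton]
    exact dvd_mul_left a u
  have eb0 : φb (Ideal.Quotient.mk (Ideal.span ({n} : Set R)) (v * b)) = 0 := by
    rw [hφb, Ideal.Quotient.eq_zero_iff_mem, Ideal.mem_span_singleton]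
    exact dvd_mul_left b v
  have ea1 : φa (Ideal.Quotient.mk (Ideal.span ({n} : Set R)) (v * b)) = 1 := by
    rw [hφa]
    have h0 : Ideal.Quotient.mk (Ideal.span ({a} : Set R)) (u * a) = 0 := by
      rw [Ideal.Quotient.eq_zero_iff_mem, Ideal.mem_span_singleton]
      exact dvd_mul_left a u
    calc Ideal.Quotient.mk (Ideal.span ({a} : Set R)) (v * b)
        = Ideal.Quotient.mk (Ideal.span ({a} : Set R)) (u * a + v * b)
          - Ideal.Quotient.mk (Ideal.span ({a} : Set R)) (u * a) := by rw [map_add]; ring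
      _ = 1 := by rw [huv, map_one, h0, sub_zero]
  have eb1 : φb (Ideal.Quotient.mk (Ideal.span ({n} : Set R)) (u * a)) = 1 := by
    rw [hφb]
    have h0 : Ideal.Quotient.mk (Ideal.span ({b} : Set R)) (v * b) = 0 := by
      rw [Ideal.Quotient.eq_zero_iff_mem, Ideal.mem_span_singleton]
      exact dvd_mul_left b v
    calc Ideal.Quotient.mk (Ideal.span ({b} : Set R)) (u * a)
        = Ideal.Quotient.mk (Ideal.span ({b} : Set R)) (u * a + v * b)
          - Ideal.Quotient.mk (Ideal.span ({b} : Set R)) (v * b) := by rw [map_add]; ring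
      _ = 1 := by rw [huv, map_one, h0, sub_zero]
  have hUa : IsUnit (φb (Ideal.Quotient.mk (Ideal.span ({n} : Set R)) a)) := by
    refine IsUnit.of_mul_eq_one (φb (Ideal.Quotient.mk (Ideal.span ({n} : Set R)) u)) ?_
    rw [← map_mul, ← map_mul, show a * u = u * a from mul_comm a u, eb1]
  have hUb : IsUnit (φa (Ideal.Quotient.mk (Ideal.span ({n} : Set R)) b)) := by
    refine IsUnit.of_mul_eq_one (φa (Ideal.Quotient.mk (Ideal.span ({n} : Set R)) v)) ?_
    rw [← map_mul, ← map_mul, show b * v = v * b from mul_comm b v, ea1]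
  constructor
  · rintro g ⟨k, l, rfl⟩
    have hmma : ∀ (e : σ →₀ ℕ) (c : R ⧸ Ideal.span ({n} : Set R))
        (p : MvPolynomial σ (R ⧸ Ideal.span ({n} : Set R))),
        MvPolynomial.map φa (monomial e c * p) = monomial e (φa c) * MvPolynomial.map φa p := by
      intro e c p
      rw [map_mul, MvPolynomial.map_monomial]
    have hmmb : ∀ (e : σ →₀ ℕ) (c : R ⧸ Ideal.span ({n} : Set R))
        (p : MvPolynomial σ (R ⧸ Ideal.span ({n} : Set R))),
        MvPolynomial.map φb (monomial e c * p) = monomial e (φb c) * MvPolynomial.map φb p := by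
      intro e c p
      rw [map_mul, MvPolynomial.map_monomial]
    have hca : ∀ (x y : R ⧸ Ideal.span ({n} : Set R)), φa (x * y) = φa x * φa y :=
      fun x y => map_mul _ _ _
    have hcb : ∀ (x y : R ⧸ Ideal.span ({n} : Set R)), φb (x * y) = φb x * φb y :=
      fun x y => map_mul _ _ _
    apply quot_mem_glue hnab huv φa hφa φb hφb I
    · rw [map_add, hmma, hmma, hca, hca, ea0, ea1, zero_mul, one_mul,
        MvPolynomial.monomial_zero, zero_mul, zero_add]
      exact Ideal.mul_mem_left _ _ (hGa.1 _ ⟨ga k, ⟨k, rfl⟩, rfl⟩)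
    · rw [map_add, hmmb, hmmb, hcb, hcb, eb0, eb1, zero_mul, one_mul,
        MvPolynomial.monomial_zero, zero_mul, add_zero]
      exact Ideal.mul_mem_left _ _ (hGb.1 _ ⟨gb l, ⟨l, rfl⟩, rfl⟩)
  · intro f hf hf0
    have hlcf : m.lc f ≠ 0 := m.lc_ne_zero' hf0
    have extract_a : φa (m.lc f) ≠ 0 → ∃ k, m.lm (ga k) ≤ m.lm f
        ∧ m.lc (ga k) ∣ Ideal.Quotient.mk (Ideal.span ({n} : Set R)) a
        ∧ φa (m.lc (ga k)) ≠ 0 ∧ φa (m.lc (ga k)) ∣ φa (m.lc f) := by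
      intro hac
      have hfm := m.lm_map' (φ := φa) (f := f) hac
      have hmapf0 : MvPolynomial.map φa f ≠ 0 := by
        intro h
        apply hac
        rw [← hfm.2, h]
        simp [MonomialOrder.lc]
      obtain ⟨g, hgmem, hg0, hglm, hglc⟩ := hGa.2 _ (Ideal.mem_map_of_mem _ hf) hmapf0
      obtain ⟨g', ⟨k, rfl⟩, rfl⟩ := hgmem
      have hknot : ga k ≠ C (Ideal.Quotient.mk (Ideal.span ({n} : Set R)) a) := by
        intro h
        apply hg0
        show MvPolynomial.map φa (ga k) = 0
        rw [h, MvPolynomial.map_C, eaa, MvPolynomial.C_0]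
      obtain ⟨hdvd, hndvd⟩ := hlca k hknot
      have hlcka : φa (m.lc (ga k)) ≠ 0 := fun h => hndvd ((hker_a _).1 h)
      have hgm := m.lm_map' (φ := φa) hlcka
      refine ⟨k, ?_, hdvd, hlcka, ?_⟩
      · rw [hgm.1, hfm.1] at hglm; exact hglm
      · rw [hgm.2, hfm.2] at hglc; exact hglc
    have extract_b : φb (m.lc f) ≠ 0 → ∃ l, m.lm (gb l) ≤ m.lm f
        ∧ m.lc (gb l) ∣ Ideal.Quotient.mk (Ideal.span ({n} : Set R)) b
        ∧ φb (m.lc (gb l)) ≠ 0 ∧ φb (m.lc (gb l)) ∣ φb (m.lc f) := by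
      intro hbc
      have hfm := m.lm_map' (φ := φb) (f := f) hbc
      have hmapf0 : MvPolynomial.map φb f ≠ 0 := by
        intro h
        apply hbc
        rw [← hfm.2, h]
        simp [MonomialOrder.lc]
      obtain ⟨g, hgmem, hg0, hglm, hglc⟩ := hGb.2 _ (Ideal.mem_map_of_mem _ hf) hmapf0
      obtain ⟨g', ⟨l, rfl⟩, rfl⟩ := hgmem
      have hlnot : gb l ≠ C (Ideal.Quotient.mk (Ideal.span ({n} : Set R)) b) := by
        intro h
        apply hg0
        show MvPolynomial.map φb (gb l) = 0
        rw [h, MvPolynomial.map_C, ebb, MvPolynomial.C_0]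
      obtain ⟨hdvd, hndvd⟩ := hlcb l hlnot
      have hlckb : φb (m.lc (gb l)) ≠ 0 := fun h => hndvd ((hker_b _).1 h)
      have hgm := m.lm_map' (φ := φb) hlckb
      refine ⟨l, ?_, hdvd, hlckb, ?_⟩
      · rw [hgm.1, hfm.1] at hglm; exact hglm
      · rw [hgm.2, hfm.2] at hglc; exact hglc
    have key : ∀ (k : K) (l : L), m.lm (ga k) ≤ m.lm f → m.lm (gb l) ≤ m.lm f →
        m.lc (ga k) * m.lc (gb l) ≠ 0 → m.lc (ga k) * m.lc (gb l) ∣ m.lc f →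
        ∃ g, (∃ (k : K) (l : L), g =
          monomial (m.lm (ga k) ⊔ m.lm (gb l) - m.lm (gb l))
            (Ideal.Quotient.mk (Ideal.span ({n} : Set R)) (u * a) * m.lc (ga k)) * gb l
          + monomial (m.lm (ga k) ⊔ m.lm (gb l) - m.lm (ga k))
            (Ideal.Quotient.mk (Ideal.span ({n} : Set R)) (v * b) * m.lc (gb l)) * ga k)
          ∧ g ≠ 0 ∧ m.lm g ≤ m.lm f ∧ m.lc g ∣ m.lc f := by
      intro k l hA hB hne hdvd
      set δ := m.lm (ga k) ⊔ m.lm (gb l) with hδ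
      set F := monomial (δ - m.lm (gb l))
          (Ideal.Quotient.mk (Ideal.span ({n} : Set R)) (u * a) * m.lc (ga k)) * gb l
        + monomial (δ - m.lm (ga k))
          (Ideal.Quotient.mk (Ideal.span ({n} : Set R)) (v * b) * m.lc (gb l)) * ga k with hFdef
      have e1 : (δ - m.lm (gb l)) + m.lm (gb l) = δ := tsub_add_cancel_of_le le_sup_right
      have e2 : (δ - m.lm (ga k)) + m.lm (ga k) = δ := tsub_add_cancel_of_le le_sup_left
      have c1 := MvPolynomial.coeff_monomial_mul (m.lm (gb l)) (δ - m.lm (gb l))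
        (Ideal.Quotient.mk (Ideal.span ({n} : Set R)) (u * a) * m.lc (ga k)) (gb l)
      have c2 := MvPolynomial.coeff_monomial_mul (m.lm (ga k)) (δ - m.lm (ga k))
        (Ideal.Quotient.mk (Ideal.span ({n} : Set R)) (v * b) * m.lc (gb l)) (ga k)
      rw [e1] at c1
      rw [e2] at c2
      have hone : (Ideal.Quotient.mk (Ideal.span ({n} : Set R)) (u * a)
          + Ideal.Quotient.mk (Ideal.span ({n} : Set R)) (v * b)) = 1 := by
        rw [← map_add, huv, map_one]
      have hcoeff : F.coeff δ = m.lc (ga k) * m.lc (gb l) := by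
        rw [hFdef, MvPolynomial.coeff_add, c1, c2, ← m.lc_def' (gb l), ← m.lc_def' (ga k)]
        linear_combination (m.lc (ga k) * m.lc (gb l)) * hone
      have hsupp : ∀ d ∈ F.support, m.toSyn d ≤ m.toSyn δ := by
        intro d hd
        rw [hFdef] at hd
        rcases Finset.mem_union.1 (MvPolynomial.support_add hd) with h | h
        · calc m.toSyn d ≤ m.toSyn (δ - m.lm (gb l)) + m.toSyn (m.lm (gb l)) :=
              m.toSyn_le_of_mem_support_monomial_mul h
            _ = m.toSyn δ := by rw [← map_add, e1]
        · calc m.toSyn d ≤ m.toSyn (δ - m.lm (ga k)) + m.toSyn (m.lm (ga k)) :=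
              m.toSyn_le_of_mem_support_monomial_mul h
            _ = m.toSyn δ := by rw [← map_add, e2]
      have hc0 : F.coeff δ ≠ 0 := by rw [hcoeff]; exact hne
      have hF0 : F ≠ 0 := fun h => hc0 (by rw [h, MvPolynomial.coeff_zero])
      have hlmF : m.lm F = δ := m.lm_eq_of' hc0 hsupp
      have hlcF : m.lc F = m.lc (ga k) * m.lc (gb l) := (m.lc_eq_of' hc0 hsupp).trans hcoeff
      exact ⟨F, ⟨k, l, by rw [hFdef]⟩, hF0,
        by rw [hlmF, hδ]; exact sup_le hA hB, by rw [hlcF]; exact hdvd⟩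
    by_cases hca : φa (m.lc f) = 0
    · -- case: a-component of lc f vanishes; use the constant element of G_a
      have hcb : φb (m.lc f) ≠ 0 := fun h => hlcf (quot_inj hnab huv φa hφa φb hφb hca h)
      obtain ⟨k0, hk0⟩ := haGa
      obtain ⟨l, hB, hdvdb, hlcb0, hφdb⟩ := extract_b hcb
      have hane : (Ideal.Quotient.mk (Ideal.span ({n} : Set R)) a) ≠ 0 := by
        intro h
        exact hga0 k0 (by rw [hk0, h, MvPolynomial.C_0])
      have hc00 : (C (Ideal.Quotient.mk (Ideal.span ({n} : Set R)) a)
          : MvPolynomial σ (R ⧸ Ideal.span ({n} : Set R))).coeff 0 ≠ 0 := by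
        rw [MvPolynomial.coeff_zero_C]; exact hane
      have hsuppC : ∀ d ∈ (C (Ideal.Quotient.mk (Ideal.span ({n} : Set R)) a)
          : MvPolynomial σ (R ⧸ Ideal.span ({n} : Set R))).support,
          m.toSyn d ≤ m.toSyn 0 := by
        intro d hd
        rw [MvPolynomial.C_apply] at hd
        have hd0 : d = 0 :=
          (show (0 : σ →₀ ℕ) = d by simpa [MvPolynomial.support_monomial, hane] using hd).symm
        rw [hd0]
      have hlmk0 : m.lm (ga k0) = 0 := by rw [hk0]; exact m.lm_eq_of' hc00 hsuppC
      have hlck0 : m.lc (ga k0) = Ideal.Quotient.mk (Ideal.span ({n} : Set R)) a := by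
        rw [hk0]
        exact (m.lc_eq_of' hc00 hsuppC).trans (MvPolynomial.coeff_zero_C _)
      refine key k0 l (by rw [hlmk0]; exact zero_le) hB ?_ ?_
      · rw [hlck0]
        intro h
        have h2 : φb (Ideal.Quotient.mk (Ideal.span ({n} : Set R)) a * m.lc (gb l)) = 0 := by
          rw [h, map_zero]
        rw [map_mul] at h2
        exact hlcb0 (hUa.mul_right_eq_zero.1 h2)
      · rw [hlck0]
        apply quot_dvd_glue hnab huv φa hφa φb hφb
        · rw [map_mul, eaa, zero_mul, hca]
        · rw [map_mul]
          exact unit_mul_dvd' hUa hφdb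
    · by_cases hcb : φb (m.lc f) = 0
      · -- case: b-component of lc f vanishes; use the constant element of G_b
        obtain ⟨l0, hl0⟩ := hbGb
        obtain ⟨k, hA, hdvda, hlca0, hφda⟩ := extract_a hca
        have hbne : (Ideal.Quotient.mk (Ideal.span ({n} : Set R)) b) ≠ 0 := by
          intro h
          exact hgb0 l0 (by rw [hl0, h, MvPolynomial.C_0])
        have hc00 : (C (Ideal.Quotient.mk (Ideal.span ({n} : Set R)) b)
            : MvPolynomial σ (R ⧸ Ideal.span ({n} : Set R))).coeff 0 ≠ 0 := by
          rw [MvPolynomial.coeff_zero_C]; exact hbne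
        have hsuppC : ∀ d ∈ (C (Ideal.Quotient.mk (Ideal.span ({n} : Set R)) b)
            : MvPolynomial σ (R ⧸ Ideal.span ({n} : Set R))).support,
            m.toSyn d ≤ m.toSyn 0 := by
          intro d hd
          rw [MvPolynomial.C_apply] at hd
          have hd0 : d = 0 :=
            (show (0 : σ →₀ ℕ) = d by simpa [MvPolynomial.support_monomial, hbne] using hd).symm
          rw [hd0]
        have hlml0 : m.lm (gb l0) = 0 := by rw [hl0]; exact m.lm_eq_of' hc00 hsuppC
        have hlcl0 : m.lc (gb l0) = Ideal.Quotient.mk (Ideal.span ({n} : Set R)) b := by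
          rw [hl0]
          exact (m.lc_eq_of' hc00 hsuppC).trans (MvPolynomial.coeff_zero_C _)
        refine key k l0 hA (by rw [hlml0]; exact zero_le) ?_ ?_
        · rw [hlcl0]
          intro h
          have h2 : φa (m.lc (ga k) * Ideal.Quotient.mk (Ideal.span ({n} : Set R)) b) = 0 := by
            rw [h, map_zero]
          rw [map_mul] at h2
          exact hlca0 (hUb.mul_left_eq_zero.1 h2)
        · rw [hlcl0]
          apply quot_dvd_glue hnab huv φa hφa φb hφb
          · rw [map_mul]
            exact mul_unit_dvd' hUb hφda
          · rw [map_mul, ebb, mul_zero, hcb]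
      · -- main case: both components of lc f nonzero
        obtain ⟨k, hA, hdvda, hlca0, hφda⟩ := extract_a hca
        obtain ⟨l, hB, hdvdb, hlcb0, hφdb⟩ := extract_b hcb
        refine key k l hA hB ?_ ?_
        · intro h
          have h2 : φa (m.lc (ga k) * m.lc (gb l)) = 0 := by rw [h, map_zero]
          rw [map_mul] at h2
          have hU : IsUnit (φa (m.lc (gb l))) :=
            isUnit_of_dvd_unit (map_dvd φa hdvdb) hUb
          exact hlca0 (hU.mul_left_eq_zero.1 h2)
        · apply quot_dvd_glue hnab huv φa hφa φb hφb
          · rw [map_mul]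
            exact mul_unit_dvd' (isUnit_of_dvd_unit (map_dvd φa hdvdb) hUb) hφda
          · rw [map_mul]
            exact unit_mul_dvd' (isUnit_of_dvd_unit (map_dvd φb hdvda) hUa) hφdb
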